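/- For every natural number n there exists an undirected graph G (self-loops allowed) with positive integer edge weights Π such that (G,Π) has exactly n weighted 2-realizations. -/

import Mathlib

/-- Number of positions `k` with `x_k = u` and `x_{k+1} = v`. -/
def arcCount {V : Type*} [DecidableEq V] (x : List V) (u v : V) : ℕ :=
  ((Finset.range x.length).filter fun k => x[k]? = some u ∧ x[k + 1]? = some v).card

/-- Weight of the edge `{u,v}` in the weighted sequence graph of `x` with window size 2:
the number of ordered pairs `(k,k')` with `|k − k'| = 1`, `x_k = u` and `x_{k'} = v`
(so each consecutive occurrence of a self-loop `u,u` contributes 2). -/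
def edgeCount {V : Type*} [DecidableEq V] (x : List V) (u v : V) : ℕ :=
  arcCount x u v + arcCount x v u

/-- `x` is a weighted 2-realization of the weighted undirected graph (self-loops allowed)
on vertex set `V` whose edges are the pairs `{u,v}` with `π u v > 0`, carrying weight
`π u v`. -/
def IsWRealizationG {V : Type*} [DecidableEq V] (π : V → V → ℕ) (x : List V) : Prop :=
  x ≠ [] ∧ (∀ v : V, v ∈ x) ∧ ∀ u v : V, π u v = edgeCount x u v

section Aux

lemma arcCount_nil' {V : Type*} [DecidableEq V] (u v : V) : arcCount ([] : List V) u v = 0 := rfl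

lemma arcCount_cons {V : Type*} [DecidableEq V] (a : V) (l : List V) (u v : V) :
    arcCount (a :: l) u v = arcCount l u v + (if a = u ∧ l.head? = some v then 1 else 0) := by
  unfold arcCount
  rw [Finset.card_filter, Finset.card_filter]
  simp only [List.length_cons]
  rw [Finset.sum_range_succ']
  congr 1
  · cases l <;> simp [List.head?]

lemma fin2_cases (a : Fin 2) : a = 0 ∨ a = 1 := by omega

lemma lemA (x : List (Fin 2)) :
    arcCount x 0 1 + arcCount x 1 1 + (if x.head? = some 1 then 1 else 0) = x.count 1 := by
  induction x with
  | nil => simp [arcCount_nil']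
  | cons a l ih =>
    rw [List.count_cons]
    rw [← ih]
    simp only [arcCount_cons, List.head?_cons]
    rcases fin2_cases a with rfl | rfl <;> rcases h : l.head? with _ | b
    · simp
    · rcases fin2_cases b with rfl | rfl <;> simp <;> omega
    · simp
    · rcases fin2_cases b with rfl | rfl <;> simp <;> omega

lemma lemB (x : List (Fin 2)) :
    arcCount x 1 0 + arcCount x 1 1 + (if x.getLast? = some 1 then 1 else 0) = x.count 1 := by
  induction x with
  | nil => simp [arcCount_nil']
  | cons a l ih =>
    rw [List.count_cons]
    rw [← ih]
    simp only [arcCount_cons]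
    cases l with
    | nil =>
      rcases fin2_cases a with rfl | rfl <;> simp [arcCount_nil']
    | cons b t =>
      rw [List.getLast?_cons_cons]
      simp only [List.head?_cons]
      rcases fin2_cases a with rfl | rfl <;> rcases fin2_cases b with rfl | rfl <;> simp <;> omega

lemma lemC (x : List (Fin 2)) (hx : x ≠ []) :
    arcCount x 0 0 + arcCount x 0 1 + arcCount x 1 0 + arcCount x 1 1 + 1 = x.length := by
  induction x with
  | nil => simp at hx
  | cons a l ih =>
    cases l with
    | nil =>
      rcases fin2_cases a with rfl | rfl <;> simp [arcCount_nil', arcCount_cons]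
    | cons b t =>
      have := ih (by simp)
      simp only [arcCount_cons, List.head?_cons, List.length_cons] at *
      rcases fin2_cases a with rfl | rfl <;> rcases fin2_cases b with rfl | rfl <;> simp at * <;> omega

lemma zeros_of_count (l : List (Fin 2)) (h : l.count 1 = 0) : l = List.replicate l.length 0 := by
  rw [List.eq_replicate_iff]
  refine ⟨rfl, fun b hb => ?_⟩
  rcases fin2_cases b with rfl | rfl
  · rfl
  · rw [List.count_eq_zero] at h; exact absurd hb h

lemma one_one_struct (x : List (Fin 2)) (h : x.count 1 = 1) :
    ∃ p q, x = List.replicate p 0 ++ 1 :: List.replicate q 0 := by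
  induction x with
  | nil => simp at h
  | cons a l ih =>
    rcases fin2_cases a with rfl | rfl
    · rw [List.count_cons] at h
      simp at h
      obtain ⟨p, q, hpq⟩ := ih h
      exact ⟨p + 1, q, by rw [List.replicate_succ]; simp [hpq]⟩
    · rw [List.count_cons] at h
      simp at h
      refine ⟨0, l.length, ?_⟩
      conv_lhs => rw [zeros_of_count l h]
      simp

lemma head?_rep_app (m : ℕ) (l : List (Fin 2)) :
    (List.replicate m 0 ++ 0 :: l).head? = some 0 := by
  cases m <;> simp [List.replicate_succ]

lemma arc_rep (u v : Fin 2) (m : ℕ) (l : List (Fin 2)) :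
    arcCount (List.replicate m 0 ++ 0 :: l) u v
      = arcCount (0 :: l) u v + m * (if 0 = u ∧ (0 : Fin 2) = v then 1 else 0) := by
  induction m with
  | zero => simp
  | succ k ih =>
    rw [List.replicate_succ, List.cons_append, arcCount_cons, ih, head?_rep_app]
    have : ((0 : Fin 2) = u ∧ (some 0 : Option (Fin 2)) = some v) ↔ ((0:Fin 2) = u ∧ (0:Fin 2) = v) := by simp
    rw [if_congr this rfl rfl]
    ring

lemma arc_L (p q : ℕ) (u v : Fin 2) :
    arcCount (List.replicate (p+1) 0 ++ 1 :: List.replicate (q+1) 0) u v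
      = (p + q) * (if u = 0 ∧ v = 0 then 1 else 0)
        + (if u = 0 ∧ v = 1 then 1 else 0) + (if u = 1 ∧ v = 0 then 1 else 0) := by
  rw [show List.replicate (p+1) (0:Fin 2) ++ 1 :: List.replicate (q+1) 0
      = List.replicate p 0 ++ 0 :: (1 :: List.replicate (q+1) 0) from by
    rw [List.replicate_succ']; simp]
  rw [arc_rep, arcCount_cons, arcCount_cons]
  rw [show List.replicate (q+1) (0:Fin 2) = List.replicate q 0 ++ 0 :: [] from by
    rw [List.replicate_succ']]
  rw [arc_rep, head?_rep_app]
  have h1 : arcCount ((0:Fin 2) :: []) u v = 0 := by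
    simp [arcCount_cons, arcCount_nil']
  rw [h1]
  simp only [List.head?_cons]
  rcases fin2_cases u with rfl | rfl <;> rcases fin2_cases v with rfl | rfl <;> simp <;> ring

lemma arc_M (a : ℕ) (u v : Fin 2) :
    arcCount ((1 : Fin 2) :: (List.replicate (a+1) 0 ++ [1])) u v
      = a * (if u = 0 ∧ v = 0 then 1 else 0)
        + (if u = 0 ∧ v = 1 then 1 else 0) + (if u = 1 ∧ v = 0 then 1 else 0) := by
  rw [arcCount_cons]
  rw [show List.replicate (a+1) (0:Fin 2) ++ [1] = List.replicate a 0 ++ 0 :: [1] from by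
    rw [List.replicate_succ']; simp]
  rw [arc_rep, head?_rep_app, arcCount_cons]
  have h1 : arcCount ((1:Fin 2) :: []) u v = 0 := by simp [arcCount_cons, arcCount_nil']
  rw [h1]
  simp only [List.head?_cons]
  rcases fin2_cases u with rfl | rfl <;> rcases fin2_cases v with rfl | rfl <;> simp <;> ring

/-- the weight function for the main case -/
def pi2 (a : ℕ) : Fin 2 → Fin 2 → ℕ := fun u v => if u = v then (if u = 0 then 2*a else 0) else 2

/-- candidate realizations with one interior `1` -/
def LL (a p : ℕ) : List (Fin 2) := List.replicate p 0 ++ 1 :: List.replicate (a + 2 - p) 0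

/-- the candidate realization with `1` at both ends -/
def MM (a : ℕ) : List (Fin 2) := 1 :: (List.replicate (a+1) 0 ++ [1])

lemma pi2_eval (a : ℕ) (x : List (Fin 2))
    (hx : ∀ u v, arcCount x u v = a * (if u = 0 ∧ v = 0 then 1 else 0)
        + (if u = 0 ∧ v = 1 then 1 else 0) + (if u = 1 ∧ v = 0 then 1 else 0)) :
    ∀ u v, pi2 a u v = edgeCount x u v := by
  intro u v
  rw [edgeCount, hx u v, hx v u]
  rcases fin2_cases u with rfl | rfl <;> rcases fin2_cases v with rfl | rfl <;>
    simp [pi2] <;> ring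

lemma LL_realizes (a p : ℕ) (hp1 : 1 ≤ p) (hp2 : p ≤ a + 1) :
    IsWRealizationG (pi2 a) (LL a p) := by
  obtain ⟨p0, rfl⟩ : ∃ p0, p = p0 + 1 := ⟨p - 1, by omega⟩
  have hq : a + 2 - (p0 + 1) = (a - p0) + 1 := by omega
  have hL : LL a (p0+1) = List.replicate (p0+1) 0 ++ 1 :: List.replicate ((a - p0)+1) 0 := by
    rw [LL, hq]
  refine ⟨by simp [hL], ?_, ?_⟩
  · intro v
    rcases fin2_cases v with rfl | rfl <;> simp [hL, List.replicate_succ]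
  · apply pi2_eval
    intro u v
    rw [hL, arc_L]
    have : p0 + (a - p0) = a := by omega
    rw [this]

lemma MM_realizes (a : ℕ) : IsWRealizationG (pi2 a) (MM a) := by
  refine ⟨by simp [MM], ?_, ?_⟩
  · intro v
    rcases fin2_cases v with rfl | rfl <;> simp [MM, List.replicate_succ]
  · apply pi2_eval
    intro u v
    rw [MM, arc_M]

end Aux

theorem stmt10 (n : ℕ) :
    ∃ (N : ℕ) (π : Fin N → Fin N → ℕ),
      (∀ u v : Fin N, π u v = π v u) ∧
      {x : List (Fin N) | IsWRealizationG π x}.Finite ∧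
      {x : List (Fin N) | IsWRealizationG π x}.ncard = n := by
  rcases n with _ | _ | a
  · -- n = 0 : odd loop weight, no realization
    refine ⟨1, fun _ _ => 1, fun _ _ => rfl, ?_, ?_⟩ <;>
    · have hset : {x : List (Fin 1) | IsWRealizationG (fun _ _ => 1) x} = ∅ := by
        ext x
        simp only [Set.mem_setOf_eq, Set.mem_empty_iff_false, iff_false]
        rintro ⟨hne, hmem, hπ⟩
        have h : (1:ℕ) = arcCount x 0 0 + arcCount x 0 0 := hπ 0 0
        omega
      rw [hset]
      simp
  · -- n = 1 : single vertex, no edges, only realization is [0]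
    have hset : {x : List (Fin 1) | IsWRealizationG (fun _ _ => 0) x} = {[(0 : Fin 1)]} := by
      ext x
      simp only [Set.mem_setOf_eq, Set.mem_singleton_iff]
      constructor
      · rintro ⟨hne, hmem, hπ⟩
        have h00 : arcCount x 0 0 = 0 := by
          have h : (0:ℕ) = arcCount x 0 0 + arcCount x 0 0 := hπ 0 0
          omega
        cases x with
        | nil => exact absurd rfl hne
        | cons b t =>
          have hb : b = 0 := by omega
          cases t with
          | nil => rw [hb]
          | cons c t' =>
            exfalso
            have hc : c = 0 := by omega
            rw [arcCount_cons] at h00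
            simp [hb, hc] at h00
      · rintro rfl
        refine ⟨by simp, fun v => ?_, fun u v => ?_⟩
        · have hv : v = 0 := by omega
          rw [hv]
          simp
        have hu : u = 0 := by omega
        have hv : v = 0 := by omega
        subst hu; subst hv
        simp [edgeCount, arcCount_cons, arcCount_nil']
    refine ⟨1, fun _ _ => 0, fun _ _ => rfl, ?_, ?_⟩
    · rw [hset]; exact Set.finite_singleton _
    · rw [hset]; exact Set.ncard_singleton _
  · -- n = a + 2
    classical
    set F : Finset (List (Fin 2)) := (Finset.Icc 1 (a+1)).image (LL a) ∪ {MM a} with hF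
    have hset : {x : List (Fin 2) | IsWRealizationG (pi2 a) x} = ↑F := by
      ext x
      simp only [Set.mem_setOf_eq, hF, Finset.coe_union, Finset.coe_image, Finset.coe_singleton,
        Set.mem_union, Set.mem_image, Finset.mem_coe, Finset.mem_Icc, Set.mem_singleton_iff]
      constructor
      · rintro ⟨hne, hmem, hπx⟩
        have e11 : (0:ℕ) = arcCount x 1 1 + arcCount x 1 1 := by
          have h := hπx 1 1; rw [edgeCount] at h; simpa [pi2] using h
        have e01 : (2:ℕ) = arcCount x 0 1 + arcCount x 1 0 := by
          have h := hπx 0 1; rw [edgeCount] at h; simpa [pi2] using h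
        have e00 : 2 * a = arcCount x 0 0 + arcCount x 0 0 := by
          have h := hπx 0 0; rw [edgeCount] at h; simpa [pi2] using h
        have hA := lemA x
        have hB := lemB x
        have hlen := lemC x hne
        obtain ⟨b, t, rfl⟩ : ∃ b t, x = b :: t := by
          cases x with
          | nil => exact absurd rfl hne
          | cons b t => exact ⟨b, t, rfl⟩
        obtain ⟨z, hz⟩ : ∃ z, (b :: t).getLast? = some z := by
          rcases h : (b :: t).getLast? with _ | z
          · rw [List.getLast?_eq_none_iff] at h; simp at h
          · exact ⟨z, rfl⟩
        rw [List.head?_cons] at hA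
        rw [hz] at hB
        rcases fin2_cases b with hb | hb <;> rcases fin2_cases z with hzz | hzz
        · -- head 0, last 0 : one interior 1
          subst hb; subst hzz
          simp only [show (some (0:Fin 2) = some 1) = False by simp, if_false] at hA hB
          have hcount : ((0:Fin 2) :: t).count 1 = 1 := by omega
          obtain ⟨p, q, hx⟩ := one_one_struct _ hcount
          have hlen' : ((0:Fin 2) :: t).length = a + 3 := by omega
          have hlen'' : p + 1 + q = a + 3 := by
            rw [hx] at hlen'; simp at hlen'; omega
          have hp1 : 1 ≤ p := by
            rcases Nat.eq_zero_or_pos p with rfl | h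
            · exfalso
              have hh := congrArg List.head? hx
              simp at hh
            · exact h
          have hq1 : 1 ≤ q := by
            rcases Nat.eq_zero_or_pos q with rfl | h
            · exfalso
              rw [hx] at hz
              rw [show (1:Fin 2) :: List.replicate 0 0 = [1] from rfl] at hz
              rw [List.getLast?_concat] at hz
              simp at hz
            · exact h
          left
          refine ⟨p, ⟨hp1, by omega⟩, ?_⟩
          rw [LL, show a + 2 - p = q from by omega, hx]
        · -- mixed : impossible
          subst hb; subst hzz
          exfalso
          simp only [show (some (0:Fin 2) = some 1) = False by simp,
            show (some (1:Fin 2) = some 1) = True by simp, if_false, if_true] at hA hB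
          omega
        · subst hb; subst hzz
          exfalso
          simp only [show (some (0:Fin 2) = some 1) = False by simp,
            show (some (1:Fin 2) = some 1) = True by simp, if_false, if_true] at hA hB
          omega
        · -- head 1, last 1 : x = MM a
          subst hb; subst hzz
          simp only [show (some (1:Fin 2) = some 1) = True by simp, if_true] at hA hB
          have hcount : ((1:Fin 2) :: t).count 1 = 2 := by omega
          have hlen' : ((1:Fin 2) :: t).length = a + 3 := by omega
          have htne : t ≠ [] := by
            intro h; rw [h] at hlen'; simp at hlen'
          have hzt : t.getLast? = some 1 := by
            cases t with
            | nil => exact absurd rfl htne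
            | cons c t' => rw [List.getLast?_cons_cons] at hz; exact hz
          have hsplit : t.dropLast ++ [(1:Fin 2)] = t := List.dropLast_append_getLast? 1 hzt
          have hcnt0 : t.dropLast.count 1 = 0 := by
            have : ((1:Fin 2) :: t).count 1 = 1 + t.count 1 := by
              rw [List.count_cons]; simp; ring
            have h2 : t.count 1 = 1 := by omega
            rw [← hsplit, List.count_append] at h2
            simp at h2
            exact h2
          have hdl : t.dropLast = List.replicate (t.dropLast.length) 0 := zeros_of_count _ hcnt0
          have hdlen : t.dropLast.length = a + 1 := by
            have h1 : t.length = a + 2 := by simpa using hlen'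
            rw [List.length_dropLast, h1]
            omega
          right
          rw [MM, ← hdlen, ← hdl, hsplit]
      · rintro (⟨p, ⟨hp1, hp2⟩, rfl⟩ | rfl)
        · exact LL_realizes a p hp1 hp2
        · exact MM_realizes a
    have hdisj : Disjoint ((Finset.Icc 1 (a+1)).image (LL a)) ({MM a} : Finset (List (Fin 2))) := by
      simp only [Finset.disjoint_singleton_right, Finset.mem_image, not_exists]
      rintro p ⟨hp, hLp⟩
      rw [Finset.mem_Icc] at hp
      obtain ⟨p0, rfl⟩ : ∃ p0, p = p0 + 1 := ⟨p - 1, by omega⟩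
      have : (LL a (p0+1)).head? = (MM a).head? := by rw [hLp]
      rw [LL, MM, List.replicate_succ] at this
      simp at this
    have hinjlt : ∀ p q : ℕ, p < q → q ≤ a + 1 → LL a p ≠ LL a q := by
      intro p q hpq hq2 heq
      have h1 : (LL a p)[p]? = some 1 := by
        rw [LL, List.getElem?_append_right (by simp)]
        simp
      have h2 : (LL a q)[p]? = some 0 := by
        rw [LL, List.getElem?_append, List.length_replicate, if_pos hpq,
          List.getElem?_replicate, if_pos hpq]
      rw [heq, h2] at h1
      exact absurd h1 (by simp)
    have hinj : Set.InjOn (LL a) ↑(Finset.Icc 1 (a+1)) := by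
      intro p hp q hq heq
      simp only [Finset.coe_Icc, Set.mem_Icc] at hp hq
      rcases lt_trichotomy p q with h | h | h
      · exact absurd heq (hinjlt p q h hq.2)
      · exact h
      · exact absurd heq.symm (hinjlt q p h hp.2)
    have hcard : F.card = a + 2 := by
      rw [hF, Finset.card_union_of_disjoint hdisj, Finset.card_image_of_injOn hinj,
        Nat.card_Icc, Finset.card_singleton]
      omega
    refine ⟨2, pi2 a, ?_, ?_, ?_⟩
    · intro u v
      rcases fin2_cases u with rfl | rfl <;> rcases fin2_cases v with rfl | rfl <;> simp [pi2]
    · rw [hset]; exact F.finite_toSet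
    · rw [hset, Set.ncard_coe_finset, hcard]
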